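/- (Lipschitz continuity of population gradients in W) Under the assumptions that ‖h'‖_∞, ‖h'‖_Lip ≤ CL² and ‖∇φ̂‖_∞, ‖∇φ̂‖_Lip ≤ CL², for any (a,W), (a,W̃) with ‖a‖₁/m ≤ ā and all w_i, w̃_i unit vectors: ‖∇_{w_ℓ}R(a,W̃) - ∇_{w_ℓ}R(a,W)‖ ≤ C' L² (|a_ℓ|/m)(1 + ā) max_{j≤m} ‖w̃_j - w_j‖, where R is the population risk of the two-layer network. -/

import Mathlib

open Finset

section Aux

private lemma ss_nonneg {n : ℕ} (x : Fin n → ℝ) : (0:ℝ) ≤ ∑ i, (x i)^2 :=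
  Finset.sum_nonneg fun i _ => sq_nonneg _

private lemma norm_toE {n : ℕ} (x : Fin n → ℝ) :
    ‖(WithLp.equiv 2 (Fin n → ℝ)).symm x‖ = Real.sqrt (∑ i, (x i)^2) := by
  simp only [EuclideanSpace.norm_eq, Real.norm_eq_abs, sq_abs]
  rfl

/-- Minkowski -/
private lemma sqrt_add_le {n : ℕ} (x y : Fin n → ℝ) :
    Real.sqrt (∑ i, (x i + y i)^2) ≤ Real.sqrt (∑ i, (x i)^2) + Real.sqrt (∑ i, (y i)^2) := by
  have := norm_add_le ((WithLp.equiv 2 (Fin n → ℝ)).symm x) ((WithLp.equiv 2 (Fin n → ℝ)).symm y)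
  rw [norm_toE, norm_toE] at this
  have h2 : (WithLp.equiv 2 (Fin n → ℝ)).symm x + (WithLp.equiv 2 (Fin n → ℝ)).symm y
      = (WithLp.equiv 2 (Fin n → ℝ)).symm (fun i => x i + y i) := rfl
  rw [h2, norm_toE] at this
  exact this

private lemma sqrt_smul {n : ℕ} (c : ℝ) (x : Fin n → ℝ) :
    Real.sqrt (∑ i, (c * x i)^2) = |c| * Real.sqrt (∑ i, (x i)^2) := by
  simp_rw [mul_pow, ← Finset.mul_sum]
  rw [Real.sqrt_mul (sq_nonneg c), Real.sqrt_sq_eq_abs]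

/-- generalized triangle inequality -/
private lemma sqrt_sum_le {n m : ℕ} (f : Fin m → Fin n → ℝ) :
    Real.sqrt (∑ i, (∑ j, f j i)^2) ≤ ∑ j, Real.sqrt (∑ i, (f j i)^2) := by
  have h2 : (WithLp.equiv 2 (Fin n → ℝ)).symm (fun i => ∑ j, f j i)
      = ∑ j, (WithLp.equiv 2 (Fin n → ℝ)).symm (f j) := by
    ext i
    simp [Finset.sum_apply]
  have := norm_sum_le Finset.univ (fun j => (WithLp.equiv 2 (Fin n → ℝ)).symm (f j))
  rw [← h2, norm_toE] at this
  calc Real.sqrt (∑ i, (∑ j, f j i)^2) ≤ ∑ j, ‖(WithLp.equiv 2 (Fin n → ℝ)).symm (f j)‖ := this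
    _ = ∑ j, Real.sqrt (∑ i, (f j i)^2) := Finset.sum_congr rfl fun j _ => norm_toE _

/-- Cauchy-Schwarz -/
private lemma abs_sum_mul_le {n : ℕ} (x y : Fin n → ℝ) :
    |∑ i, x i * y i| ≤ Real.sqrt (∑ i, (x i)^2) * Real.sqrt (∑ i, (y i)^2) := by
  rw [← Real.sqrt_sq_eq_abs, ← Real.sqrt_mul (ss_nonneg x)]
  exact Real.sqrt_le_sqrt (Finset.sum_mul_sq_le_sq_mul_sq _ _ _)

private lemma sum_U_sq {d k : ℕ} (U : Fin d → Fin k → ℝ)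
    (hU : ∀ j j', ∑ i, U i j * U i j' = if j = j' then (1 : ℝ) else 0) (v : Fin k → ℝ) :
    ∑ kk, (∑ j, U kk j * v j)^2 = ∑ j, (v j)^2 := by
  have step : ∀ kk : Fin d, (∑ j, U kk j * v j)^2
      = ∑ j, ∑ j', (v j * v j') * (U kk j * U kk j') := by
    intro kk
    rw [sq, Finset.sum_mul_sum]
    exact Finset.sum_congr rfl fun j _ => Finset.sum_congr rfl fun j' _ => by ring
  simp_rw [step]
  rw [Finset.sum_comm]
  have step2 : ∀ j : Fin k, ∑ kk : Fin d, ∑ j', (v j * v j') * (U kk j * U kk j')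
      = ∑ j', (v j * v j') * ∑ kk, U kk j * U kk j' := by
    intro j
    rw [Finset.sum_comm]
    exact Finset.sum_congr rfl fun j' _ => by rw [← Finset.mul_sum]
  simp_rw [step2, hU]
  simp [mul_ite, mul_one, mul_zero, sq]

private lemma Ut_le {d k : ℕ} (U : Fin d → Fin k → ℝ)
    (hU : ∀ j j', ∑ i, U i j * U i j' = if j = j' then (1 : ℝ) else 0) (x : Fin d → ℝ) :
    Real.sqrt (∑ j, (∑ kk, U kk j * x kk)^2) ≤ Real.sqrt (∑ kk, (x kk)^2) := by
  set y : Fin k → ℝ := fun j => ∑ kk, U kk j * x kk with hy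
  have hS : ∑ j, (y j)^2 = ∑ kk, x kk * (∑ j, U kk j * y j) := by
    calc ∑ j, (y j)^2 = ∑ j, y j * ∑ kk, U kk j * x kk := by
          exact Finset.sum_congr rfl fun j _ => by rw [sq, hy]
      _ = ∑ j, ∑ kk, x kk * (U kk j * y j) := by
          exact Finset.sum_congr rfl fun j _ => by rw [Finset.mul_sum]; exact Finset.sum_congr rfl fun kk _ => by ring
      _ = ∑ kk, ∑ j, x kk * (U kk j * y j) := by rw [Finset.sum_comm]
      _ = ∑ kk, x kk * (∑ j, U kk j * y j) := by
          exact Finset.sum_congr rfl fun kk _ => by rw [Finset.mul_sum]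
  have hCS : ∑ j, (y j)^2 ≤ Real.sqrt (∑ kk, (x kk)^2) * Real.sqrt (∑ kk, (∑ j, U kk j * y j)^2) := by
    rw [hS]
    exact le_trans (le_abs_self _) (abs_sum_mul_le _ _)
  rw [sum_U_sq U hU y] at hCS
  rcases eq_or_lt_of_le (ss_nonneg y) with h0 | h0
  · rw [← h0]; simp [Real.sqrt_nonneg]
  · have hsq : Real.sqrt (∑ j, (y j)^2) * Real.sqrt (∑ j, (y j)^2) = ∑ j, (y j)^2 :=
      Real.mul_self_sqrt (le_of_lt h0)
    have hpos : 0 < Real.sqrt (∑ j, (y j)^2) := Real.sqrt_pos.mpr h0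
    nlinarith [hCS, hsq, hpos]

end Aux


/-- The `kk`-th component of `∇_{w_ℓ}R(a,W)` for the population risk of the two-layer
network: `∇_{w_ℓ}R = (a_ℓ/m)[-U∇φ̂(Uᵀw_ℓ) + (1/m)Σⱼ aⱼ h'(w_ℓᵀwⱼ) wⱼ]`. -/
noncomputable def gradPopW (d m k : ℕ) (h' : ℝ → ℝ) (gφh : (Fin k → ℝ) → Fin k → ℝ)
    (U : Fin d → Fin k → ℝ) (a : Fin m → ℝ) (W : Fin m → Fin d → ℝ)
    (ℓ : Fin m) (kk : Fin d) : ℝ :=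
  (a ℓ / (m : ℝ)) *
    (-(∑ j, U kk j * gφh (fun j' => ∑ kk', U kk' j' * W ℓ kk') j)
      + (1 / (m : ℝ)) * ∑ j, a j * h' (∑ kk', W ℓ kk' * W j kk') * W j kk)

/-- Lipschitz continuity of population gradients in `W`: if
`‖h'‖_∞, ‖h'‖_Lip ≤ C L²` and `‖∇φ̂‖_∞, ‖∇φ̂‖_Lip ≤ C L²`, then for `(a,W), (a,Wt)` with
`‖a‖₁/m ≤ ā` and unit-norm rows,
`‖∇_{w_ℓ}R(a,Wt) - ∇_{w_ℓ}R(a,W)‖ ≤ C' L² (|a_ℓ|/m)(1 + ā) maxⱼ ‖w̃ⱼ - wⱼ‖`. -/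
theorem stmt_14 (C : ℝ) (hC : 0 ≤ C) :
    ∃ C' : ℝ, 0 < C' ∧
    ∀ (d m k : ℕ), 0 < m →
    ∀ (L abar : ℝ), 0 ≤ L → 0 ≤ abar →
    ∀ (h' : ℝ → ℝ) (gφh : (Fin k → ℝ) → Fin k → ℝ) (U : Fin d → Fin k → ℝ),
      (∀ q ∈ Set.Icc (-1 : ℝ) 1, |h' q| ≤ C * L ^ 2) →
      (∀ q ∈ Set.Icc (-1 : ℝ) 1, ∀ q' ∈ Set.Icc (-1 : ℝ) 1,
        |h' q - h' q'| ≤ C * L ^ 2 * |q - q'|) →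
      (∀ z : Fin k → ℝ, Real.sqrt (∑ j, (gφh z j) ^ 2) ≤ C * L ^ 2) →
      (∀ z z' : Fin k → ℝ,
        Real.sqrt (∑ j, (gφh z j - gφh z' j) ^ 2)
          ≤ C * L ^ 2 * Real.sqrt (∑ j, (z j - z' j) ^ 2)) →
      (∀ j j', ∑ i, U i j * U i j' = if j = j' then (1 : ℝ) else 0) →
    ∀ (a : Fin m → ℝ) (W Wt : Fin m → Fin d → ℝ),
      (∑ i, |a i|) / m ≤ abar →
      (∀ i, ∑ kk, (W i kk) ^ 2 = 1) → (∀ i, ∑ kk, (Wt i kk) ^ 2 = 1) →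
    ∀ ℓ : Fin m, ∀ δ : ℝ, 0 ≤ δ →
      (∀ j, Real.sqrt (∑ kk, (Wt j kk - W j kk) ^ 2) ≤ δ) →
      Real.sqrt (∑ kk, (gradPopW d m k h' gφh U a Wt ℓ kk
            - gradPopW d m k h' gφh U a W ℓ kk) ^ 2)
        ≤ C' * L ^ 2 * (|a ℓ| / m) * (1 + abar) * δ := by
  refine ⟨3 * C + 1, by positivity, ?_⟩
  intro d m k hm L abar hL habar h' gφh U hb hlip gb glip hU a W Wt ha hW hWt ℓ δ hδ hd
  have hm' : (0:ℝ) < m := by exact_mod_cast hm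
  set g : Fin k → ℝ := gφh (fun j' => ∑ kk', U kk' j' * W ℓ kk') with hgdef
  set gt : Fin k → ℝ := gφh (fun j' => ∑ kk', U kk' j' * Wt ℓ kk') with hgtdef
  set q : Fin m → ℝ := fun j => ∑ kk', W ℓ kk' * W j kk' with hqdef
  set qt : Fin m → ℝ := fun j => ∑ kk', Wt ℓ kk' * Wt j kk' with hqtdef
  set A : Fin d → ℝ := fun kk => ∑ j, U kk j * (g j - gt j) with hAdef
  set B : Fin d → ℝ := fun kk =>
    (1/(m:ℝ)) * ∑ j, a j * (h' (qt j) * Wt j kk - h' (q j) * W j kk) with hBdef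
  -- norms of rows
  have nW : ∀ i, Real.sqrt (∑ kk, (W i kk)^2) = 1 := fun i => by rw [hW i, Real.sqrt_one]
  have nWt : ∀ i, Real.sqrt (∑ kk, (Wt i kk)^2) = 1 := fun i => by rw [hWt i, Real.sqrt_one]
  -- q, qt in [-1, 1]
  have hqmem : ∀ j, q j ∈ Set.Icc (-1:ℝ) 1 := by
    intro j
    have := abs_sum_mul_le (W ℓ) (W j)
    rw [nW ℓ, nW j, one_mul] at this
    have h1 : |q j| ≤ 1 := by rw [hqdef]; exact this
    exact abs_le.mp h1
  have hqtmem : ∀ j, qt j ∈ Set.Icc (-1:ℝ) 1 := by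
    intro j
    have := abs_sum_mul_le (Wt ℓ) (Wt j)
    rw [nWt ℓ, nWt j, one_mul] at this
    have h1 : |qt j| ≤ 1 := by rw [hqtdef]; exact this
    exact abs_le.mp h1
  -- |qt j - q j| ≤ 2δ
  have hqdiff : ∀ j, |qt j - q j| ≤ 2 * δ := by
    intro j
    have hsplit : qt j - q j
        = (∑ kk', (Wt ℓ kk' - W ℓ kk') * Wt j kk') + (∑ kk', W ℓ kk' * (Wt j kk' - W j kk')) := by
      rw [hqdef, hqtdef]
      simp only [sub_mul, mul_sub, Finset.sum_sub_distrib]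
      ring
    rw [hsplit]
    have h1 := abs_sum_mul_le (fun kk' => Wt ℓ kk' - W ℓ kk') (Wt j)
    rw [nWt j, mul_one] at h1
    have h2 := abs_sum_mul_le (W ℓ) (fun kk' => Wt j kk' - W j kk')
    rw [nW ℓ, one_mul] at h2
    calc |(∑ kk', (Wt ℓ kk' - W ℓ kk') * Wt j kk') + (∑ kk', W ℓ kk' * (Wt j kk' - W j kk'))|
        ≤ |∑ kk', (Wt ℓ kk' - W ℓ kk') * Wt j kk'| + |∑ kk', W ℓ kk' * (Wt j kk' - W j kk')| :=
          abs_add_le _ _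
      _ ≤ Real.sqrt (∑ kk', (Wt ℓ kk' - W ℓ kk')^2) + Real.sqrt (∑ kk', (Wt j kk' - W j kk')^2) :=
          add_le_add h1 h2
      _ ≤ δ + δ := add_le_add (hd ℓ) (hd j)
      _ = 2 * δ := by ring
  -- representation of the gradient difference
  have hrep : ∀ kk, gradPopW d m k h' gφh U a Wt ℓ kk - gradPopW d m k h' gφh U a W ℓ kk
      = (a ℓ / m) * (A kk + B kk) := by
    intro kk
    rw [hAdef, hBdef, hgdef, hgtdef]
    simp only [gradPopW, hqdef, hqtdef, mul_sub, sub_mul, Finset.sum_sub_distrib]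
    ring
  -- bound on ‖A‖
  have bndA : Real.sqrt (∑ kk, (A kk)^2) ≤ C * L^2 * δ := by
    rw [hAdef]
    rw [sum_U_sq U hU (fun j => g j - gt j)]
    have h1 := glip (fun j' => ∑ kk', U kk' j' * W ℓ kk') (fun j' => ∑ kk', U kk' j' * Wt ℓ kk')
    rw [← hgdef, ← hgtdef] at h1
    have h2 : Real.sqrt (∑ j, ((∑ kk', U kk' j * W ℓ kk') - (∑ kk', U kk' j * Wt ℓ kk'))^2)
        ≤ δ := by
      have e1 : ∀ j : Fin k, ((∑ kk', U kk' j * W ℓ kk') - (∑ kk', U kk' j * Wt ℓ kk'))^2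
          = (∑ kk', U kk' j * (W ℓ kk' - Wt ℓ kk'))^2 := by
        intro j
        congr 1
        rw [← Finset.sum_sub_distrib]
        exact Finset.sum_congr rfl fun kk' _ => by ring
      rw [Finset.sum_congr rfl fun j _ => e1 j]
      calc Real.sqrt (∑ j, (∑ kk', U kk' j * (W ℓ kk' - Wt ℓ kk'))^2)
          ≤ Real.sqrt (∑ kk', (W ℓ kk' - Wt ℓ kk')^2) := Ut_le U hU _
        _ = Real.sqrt (∑ kk', (Wt ℓ kk' - W ℓ kk')^2) := by
            congr 1; exact Finset.sum_congr rfl fun kk' _ => by ring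
        _ ≤ δ := hd ℓ
    calc Real.sqrt (∑ j, (g j - gt j)^2) ≤ C * L^2 * Real.sqrt (∑ j,
          ((∑ kk', U kk' j * W ℓ kk') - (∑ kk', U kk' j * Wt ℓ kk'))^2) := h1
      _ ≤ C * L^2 * δ := by
          apply mul_le_mul_of_nonneg_left h2 (by positivity)
  -- per-j bound for B
  have keyj : ∀ j, Real.sqrt (∑ kk, (a j * (h' (qt j) * Wt j kk - h' (q j) * W j kk))^2)
      ≤ |a j| * (3 * (C * L^2) * δ) := by
    intro j
    rw [sqrt_smul (a j) (fun kk => h' (qt j) * Wt j kk - h' (q j) * W j kk)]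
    apply mul_le_mul_of_nonneg_left _ (abs_nonneg _)
    have hsplit : ∀ kk : Fin d, h' (qt j) * Wt j kk - h' (q j) * W j kk
        = (h' (qt j) - h' (q j)) * Wt j kk + h' (q j) * (Wt j kk - W j kk) := by
      intro kk; ring
    rw [Finset.sum_congr rfl fun kk _ => by rw [hsplit kk]]
    calc Real.sqrt (∑ kk, ((h' (qt j) - h' (q j)) * Wt j kk
            + h' (q j) * (Wt j kk - W j kk))^2)
        ≤ Real.sqrt (∑ kk, ((h' (qt j) - h' (q j)) * Wt j kk)^2)
            + Real.sqrt (∑ kk, (h' (q j) * (Wt j kk - W j kk))^2) :=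
          sqrt_add_le _ _
      _ = |h' (qt j) - h' (q j)| * Real.sqrt (∑ kk, (Wt j kk)^2)
            + |h' (q j)| * Real.sqrt (∑ kk, (Wt j kk - W j kk)^2) := by
          rw [sqrt_smul, sqrt_smul]
      _ ≤ (C * L^2 * (2 * δ)) * 1 + (C * L^2) * δ := by
          apply add_le_add
          · apply mul_le_mul _ (le_of_eq (nWt j)) (Real.sqrt_nonneg _) (by positivity)
            calc |h' (qt j) - h' (q j)| ≤ C * L^2 * |qt j - q j| :=
                  hlip _ (hqtmem j) _ (hqmem j)
              _ ≤ C * L^2 * (2 * δ) :=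
                  mul_le_mul_of_nonneg_left (hqdiff j) (by positivity)
          · exact mul_le_mul (hb _ (hqmem j)) (hd j) (Real.sqrt_nonneg _) (by positivity)
      _ = 3 * (C * L^2) * δ := by ring
  -- bound on ‖B‖
  have bndB : Real.sqrt (∑ kk, (B kk)^2) ≤ 3 * (C * L^2) * abar * δ := by
    rw [hBdef]
    rw [sqrt_smul ((1:ℝ)/m) (fun kk => ∑ j, a j * (h' (qt j) * Wt j kk - h' (q j) * W j kk))]
    have h1 : Real.sqrt (∑ kk, (∑ j, a j * (h' (qt j) * Wt j kk - h' (q j) * W j kk))^2)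
        ≤ ∑ j, Real.sqrt (∑ kk, (a j * (h' (qt j) * Wt j kk - h' (q j) * W j kk))^2) :=
      sqrt_sum_le _
    have h2 : ∑ j, Real.sqrt (∑ kk, (a j * (h' (qt j) * Wt j kk - h' (q j) * W j kk))^2)
        ≤ ∑ j, |a j| * (3 * (C * L^2) * δ) :=
      Finset.sum_le_sum fun j _ => keyj j
    have h3 : |(1:ℝ)/m| = 1/m := abs_of_pos (by positivity)
    calc |(1:ℝ)/m| * Real.sqrt (∑ kk, (∑ j, a j * (h' (qt j) * Wt j kk - h' (q j) * W j kk))^2)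
        ≤ (1/m) * ∑ j, |a j| * (3 * (C * L^2) * δ) := by
          rw [h3]
          exact mul_le_mul_of_nonneg_left (le_trans h1 h2) (by positivity)
      _ = ((∑ j, |a j|) / m) * (3 * (C * L^2) * δ) := by
          rw [← Finset.sum_mul]; ring
      _ ≤ abar * (3 * (C * L^2) * δ) := by
          apply mul_le_mul_of_nonneg_right ha (by positivity)
      _ = 3 * (C * L^2) * abar * δ := by ring
  -- put everything together
  have main : Real.sqrt (∑ kk, (gradPopW d m k h' gφh U a Wt ℓ kk
        - gradPopW d m k h' gφh U a W ℓ kk)^2)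
      ≤ (|a ℓ| / m) * (C * L^2 * δ + 3 * (C * L^2) * abar * δ) := by
    have e1 : ∑ kk, (gradPopW d m k h' gφh U a Wt ℓ kk
          - gradPopW d m k h' gφh U a W ℓ kk)^2
        = ∑ kk, ((a ℓ / m) * (A kk + B kk))^2 :=
      Finset.sum_congr rfl fun kk _ => by rw [hrep kk]
    rw [e1, sqrt_smul (a ℓ / m) (fun kk => A kk + B kk)]
    have e2 : |a ℓ / m| = |a ℓ| / m := by
      rw [abs_div, abs_of_pos hm']
    rw [e2]
    apply mul_le_mul_of_nonneg_left _ (by positivity)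
    calc Real.sqrt (∑ kk, (A kk + B kk)^2)
        ≤ Real.sqrt (∑ kk, (A kk)^2) + Real.sqrt (∑ kk, (B kk)^2) := sqrt_add_le _ _
      _ ≤ C * L^2 * δ + 3 * (C * L^2) * abar * δ := add_le_add bndA bndB
  refine le_trans main ?_
  have haℓ : 0 ≤ |a ℓ| / m := by positivity
  nlinarith [mul_nonneg (mul_nonneg (mul_nonneg hC (sq_nonneg L)) hδ) habar,
    mul_nonneg haℓ (mul_nonneg (mul_nonneg (mul_nonneg hC (sq_nonneg L)) hδ) habar),
    mul_nonneg haℓ (mul_nonneg (sq_nonneg L) hδ),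
    mul_nonneg (mul_nonneg haℓ (mul_nonneg (sq_nonneg L) hδ)) habar,
    mul_nonneg (mul_nonneg haℓ (mul_nonneg (mul_nonneg hC (sq_nonneg L)) hδ)) habar]
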